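/- arXiv:2401.17060 — 3 statements merged into one kernel-verified Lean document; each statement's English description precedes it below -/
import Mathlib

section
/- Let $(\alpha_n)_{n\geq 1}$ be a square-summable sequence of complex numbers and $(r_n)_{n\geq 1}$ a bounded sequence of real numbers. Then for almost every $x \in \mathbb{R} \setminus \{r_n : n \in \mathbb{N}\}$, the series $\sum_{n\geq 1} (\log |r_n - x|)^2 |\alpha_n|^2$ converges. -/
open MeasureTheory
open scoped ENNReal

open Real Set in
private lemma logsq_le_aux {A u : ℝ} (hA : 1 ≤ A) (hu : 0 < u) (huA : u < A) :
    (Real.log u) ^ 2 ≤ 16 * u ^ (-(1/2) : ℝ) + 16 * A := by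
  rcases le_total u 1 with h1 | h1
  · have h4 : Real.log (u ^ (-(1/4) : ℝ)) ≤ u ^ (-(1/4) : ℝ) :=
      (Real.log_le_sub_one_of_pos (rpow_pos_of_pos hu _)).trans (by linarith)
    have hlog : -Real.log u = 4 * Real.log (u ^ (-(1/4) : ℝ)) := by
      rw [Real.log_rpow hu]; ring
    have hnn : 0 ≤ -Real.log u := by
      simpa using Real.log_nonpos hu.le h1
    have heq : (Real.log u) ^ 2 = (-Real.log u) ^ 2 := by ring
    rw [heq, hlog]
    have hb : (4 * Real.log (u ^ (-(1/4) : ℝ))) ^ 2 ≤ (4 * u ^ (-(1/4) : ℝ)) ^ 2 := by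
      apply pow_le_pow_left₀ (by linarith [hlog ▸ hnn]) (by linarith) 2
    refine hb.trans ?_
    have he : (4 * u ^ (-(1/4) : ℝ)) ^ 2 = 16 * u ^ (-(1/2) : ℝ) := by
      rw [mul_pow, ← Real.rpow_natCast (u ^ (-(1/4):ℝ)) 2, ← Real.rpow_mul hu.le]
      norm_num
    rw [he]
    have : 0 ≤ 16 * A := by linarith
    linarith
  · have h4 : Real.log (u ^ ((1/4) : ℝ)) ≤ u ^ ((1/4) : ℝ) :=
      (Real.log_le_sub_one_of_pos (rpow_pos_of_pos hu _)).trans (by linarith)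
    have hlog : Real.log u = 4 * Real.log (u ^ ((1/4) : ℝ)) := by
      rw [Real.log_rpow hu]; ring
    have hnn : 0 ≤ Real.log u := Real.log_nonneg h1
    rw [hlog]
    have hb : (4 * Real.log (u ^ ((1/4) : ℝ))) ^ 2 ≤ (4 * u ^ ((1/4) : ℝ)) ^ 2 := by
      apply pow_le_pow_left₀ (by linarith [hlog ▸ hnn]) (by linarith) 2
    refine hb.trans ?_
    have he : (4 * u ^ ((1/4) : ℝ)) ^ 2 = 16 * u ^ ((1/2) : ℝ) := by
      rw [mul_pow, ← Real.rpow_natCast (u ^ ((1/4):ℝ)) 2, ← Real.rpow_mul hu.le]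
      norm_num
    rw [he]
    have h2 : u ^ ((1/2):ℝ) ≤ A ^ ((1/2):ℝ) :=
      Real.rpow_le_rpow hu.le huA.le (by norm_num)
    have h3 : A ^ ((1/2):ℝ) ≤ A ^ (1:ℝ) :=
      Real.rpow_le_rpow_of_exponent_le hA (by norm_num)
    rw [Real.rpow_one] at h3
    have : 0 ≤ 16 * u ^ (-(1/2):ℝ) := by positivity
    nlinarith

open Real Set in
private lemma rpow_half_lintegral_aux {A : ℝ} (hA : 1 ≤ A) :
    ∫⁻ t in Ioo (-A) A, ENNReal.ofReal (|t| ^ (-(1/2) : ℝ)) < ⊤ := by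
  have hA0 : (0:ℝ) < A := by linarith
  have hpos : ∫⁻ t in Ioo (0:ℝ) A, ENNReal.ofReal (|t| ^ (-(1/2) : ℝ)) < ⊤ := by
    have hint : IntegrableOn (fun t : ℝ => t ^ (-(1/2) : ℝ)) (Ioo 0 A) :=
      (intervalIntegral.integrableOn_Ioo_rpow_iff hA0).2 (by norm_num)
    have h2 := hint.hasFiniteIntegral
    rw [hasFiniteIntegral_iff_ofReal] at h2
    · refine lt_of_le_of_lt (le_of_eq ?_) h2
      refine setLIntegral_congr_fun measurableSet_Ioo ?_
      intro t ht
      simp only [abs_of_pos ht.1]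
    · filter_upwards [ae_restrict_mem measurableSet_Ioo] with t ht
      exact (rpow_pos_of_pos ht.1 _).le
  have hneg : ∫⁻ t in Ioo (-A) (0:ℝ), ENNReal.ofReal (|t| ^ (-(1/2) : ℝ)) < ⊤ := by
    have hmp : MeasurePreserving (fun t : ℝ => -t) volume volume :=
      Measure.measurePreserving_neg _
    have hemb : MeasurableEmbedding (fun t : ℝ => -t) :=
      (Homeomorph.neg ℝ).measurableEmbedding
    have key := hmp.setLIntegral_comp_preimage_emb hemb
      (fun t => ENNReal.ofReal (|t| ^ (-(1/2) : ℝ))) (Ioo 0 A)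
    have hpre : (fun t : ℝ => -t) ⁻¹' Ioo 0 A = Ioo (-A) 0 := by
      ext t
      simp only [Set.mem_preimage, Set.mem_Ioo]
      constructor <;> intro h <;> exact ⟨by linarith [h.1, h.2], by linarith [h.1, h.2]⟩
    rw [hpre] at key
    simp only [abs_neg] at key
    rw [key]; exact hpos
  have hsub : Ioo (-A) A ⊆ Ioo (-A) 0 ∪ Ico 0 A := by
    intro t ht
    rcases lt_or_ge t 0 with h | h
    · exact Or.inl ⟨ht.1, h⟩
    · exact Or.inr ⟨h, ht.2⟩
  refine lt_of_le_of_lt (lintegral_mono_set hsub) ?_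
  refine lt_of_le_of_lt (lintegral_union_le _ _ _) ?_
  have hIco : ∫⁻ t in Ico (0:ℝ) A, ENNReal.ofReal (|t| ^ (-(1/2) : ℝ)) =
      ∫⁻ t in Ioo (0:ℝ) A, ENNReal.ofReal (|t| ^ (-(1/2) : ℝ)) := by
    rw [← Ioo_union_left hA0, lintegral_union (by measurability) (by simp)]
    simp
  rw [hIco]
  exact ENNReal.add_lt_top.2 ⟨hneg, hpos⟩

open Real Set in
private lemma logsq_lintegral_aux {A : ℝ} (hA : 1 ≤ A) :
    ∫⁻ t in Ioo (-A) A, ENNReal.ofReal ((Real.log |t|) ^ 2) < ⊤ := by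
  have hA0 : (0:ℝ) < A := by linarith
  have h0 : ∀ᵐ t : ℝ ∂(volume.restrict (Ioo (-A) A)), t ≠ 0 := by
    refine ae_restrict_of_ae ?_
    rw [ae_iff]
    simp only [not_not]
    have : {a : ℝ | a = 0} = {0} := by ext a; simp
    rw [this]
    exact measure_singleton 0
  have hbound : ∀ᵐ t : ℝ ∂(volume.restrict (Ioo (-A) A)),
      ENNReal.ofReal ((Real.log |t|) ^ 2) ≤
        ENNReal.ofReal (16 * |t| ^ (-(1/2) : ℝ)) + ENNReal.ofReal (16 * A) := by
    filter_upwards [h0, ae_restrict_mem measurableSet_Ioo] with t ht hmem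
    have hu : 0 < |t| := abs_pos.2 ht
    have huA : |t| < A := abs_lt.2 ⟨hmem.1, hmem.2⟩
    calc ENNReal.ofReal ((Real.log |t|) ^ 2)
        ≤ ENNReal.ofReal (16 * |t| ^ (-(1/2) : ℝ) + 16 * A) :=
          ENNReal.ofReal_le_ofReal (logsq_le_aux hA hu huA)
      _ = ENNReal.ofReal (16 * |t| ^ (-(1/2) : ℝ)) + ENNReal.ofReal (16 * A) := by
          rw [ENNReal.ofReal_add (by positivity) (by linarith)]
  refine lt_of_le_of_lt (lintegral_mono_ae hbound) ?_
  have hm : Measurable (fun t : ℝ => ENNReal.ofReal (16 * |t| ^ (-(1/2) : ℝ))) := by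
    measurability
  rw [lintegral_add_right _ measurable_const]
  refine ENNReal.add_lt_top.2 ⟨?_, ?_⟩
  · have : ∀ t : ℝ, ENNReal.ofReal (16 * |t| ^ (-(1/2) : ℝ)) =
        ENNReal.ofReal 16 * ENNReal.ofReal (|t| ^ (-(1/2) : ℝ)) := fun t => by
      rw [ENNReal.ofReal_mul (by norm_num)]
    simp_rw [this]
    rw [lintegral_const_mul _ (by measurability)]
    exact ENNReal.mul_lt_top ENNReal.ofReal_lt_top (rpow_half_lintegral_aux hA)
  · rw [setLIntegral_const]
    refine ENNReal.mul_lt_top ENNReal.ofReal_lt_top ?_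
    rw [Real.volume_Ioo]
    exact ENNReal.ofReal_lt_top

/-- Lemma 4.3 of [GG]: for a square-summable `α` and a bounded real sequence `r`,
for a.e. `x ∉ {r n}` the series `∑ (log|r n - x|)² ‖α n‖²` converges. -/
theorem stmt1 (α : ℕ → ℂ) (hα : Summable (fun n => ‖α n‖ ^ 2))
    (r : ℕ → ℝ) (hr : ∃ C, ∀ n, |r n| ≤ C) :
    ∀ᵐ x : ℝ, x ∉ Set.range r →
      Summable (fun n => (Real.log |r n - x|) ^ 2 * ‖α n‖ ^ 2) := by
  classical
  obtain ⟨C, hC⟩ := hr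
  have hC0 : 0 ≤ C := (abs_nonneg _).trans (hC 0)
  suffices h : ∀ M : ℕ, ∀ᵐ x ∂(volume.restrict (Set.Ioo (-(M:ℝ)) (M:ℝ))),
      Summable (fun n => (Real.log |r n - x|) ^ 2 * ‖α n‖ ^ 2) by
    have hU : (⋃ M : ℕ, Set.Ioo (-(M:ℝ)) (M:ℝ)) = Set.univ := by
      ext x
      simp only [Set.mem_iUnion, Set.mem_univ, iff_true, Set.mem_Ioo]
      obtain ⟨M, hM⟩ := exists_nat_gt |x|
      obtain ⟨h1, h2⟩ := abs_lt.1 hM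
      exact ⟨M, h1, h2⟩
    have key := (ae_restrict_iUnion_iff (fun M : ℕ => Set.Ioo (-(M:ℝ)) (M:ℝ)) _).2 h
    rw [hU, Measure.restrict_univ] at key
    filter_upwards [key] with x hx _ using hx
  intro M
  set A : ℝ := C + M + 1 with hAdef
  have hA : 1 ≤ A := by
    have : (0:ℝ) ≤ M := Nat.cast_nonneg M
    rw [hAdef]; linarith
  set f : ℕ → ℝ → ENNReal :=
    fun n x => ENNReal.ofReal ((Real.log |r n - x|) ^ 2 * ‖α n‖ ^ 2) with hfdef
  have hmeas : ∀ n, Measurable (f n) := by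
    intro n
    apply Measurable.ennreal_ofReal
    exact ((((measurable_const.sub measurable_id).abs).log.pow_const 2).mul_const _)
  set L : ℝ≥0∞ := ∫⁻ t in Set.Ioo (-A) A, ENNReal.ofReal ((Real.log |t|) ^ 2) with hLdef
  have hterm : ∀ n, ∫⁻ x in Set.Ioo (-(M:ℝ)) (M:ℝ), f n x ≤
      ENNReal.ofReal (‖α n‖ ^ 2) * L := by
    intro n
    have hsplit : ∀ x : ℝ, f n x =
        ENNReal.ofReal ((Real.log |r n - x|) ^ 2) * ENNReal.ofReal (‖α n‖ ^ 2) := by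
      intro x
      simp only [hfdef]
      exact ENNReal.ofReal_mul (sq_nonneg _)
    simp_rw [hsplit]
    rw [lintegral_mul_const' _ _ ENNReal.ofReal_ne_top]
    rw [mul_comm]
    refine mul_le_mul_right ?_ _
    have hmp : MeasurePreserving (fun x : ℝ => r n - x) volume volume :=
      Measure.measurePreserving_sub_left volume (r n)
    have hemb : MeasurableEmbedding (fun x : ℝ => r n - x) :=
      (MeasurableEquiv.subLeft (r n)).measurableEmbedding
    have hkey := hmp.setLIntegral_comp_preimage_emb hemb
      (fun t => ENNReal.ofReal ((Real.log |t|) ^ 2)) (Set.Ioo (-A) A)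
    have hsub : Set.Ioo (-(M:ℝ)) (M:ℝ) ⊆ (fun x : ℝ => r n - x) ⁻¹' Set.Ioo (-A) A := by
      intro x hx
      simp only [Set.mem_preimage, Set.mem_Ioo] at hx ⊢
      have h1 := abs_le.1 (hC n)
      constructor <;> [linarith [hx.2]; linarith [hx.1]]
    exact le_trans (lintegral_mono_set hsub) (le_of_eq hkey)
  have hL : L < ⊤ := logsq_lintegral_aux hA
  have htsum : ∑' n, ∫⁻ x in Set.Ioo (-(M:ℝ)) (M:ℝ), f n x < ⊤ := by
    refine lt_of_le_of_lt (ENNReal.tsum_le_tsum hterm) ?_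
    rw [ENNReal.tsum_mul_right]
    refine ENNReal.mul_lt_top ?_ hL
    rw [← ENNReal.ofReal_tsum_of_nonneg (fun n => sq_nonneg _) hα]
    exact ENNReal.ofReal_lt_top
  have hfin : ∫⁻ x in Set.Ioo (-(M:ℝ)) (M:ℝ), ∑' n, f n x < ⊤ := by
    rw [lintegral_tsum (fun n => (hmeas n).aemeasurable)]
    exact htsum
  have hae := ae_lt_top (Measurable.ennreal_tsum hmeas) hfin.ne
  filter_upwards [hae] with x hx
  have hs := ENNReal.summable_toReal (show (∑' n, f n x) ≠ ⊤ by
    exact (lt_of_le_of_lt (le_of_eq (by rfl)) hx).ne)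
  refine hs.congr fun n => ?_
  rw [hfdef]
  exact ENNReal.toReal_ofReal (mul_nonneg (sq_nonneg _) (sq_nonneg _))
end

section
/- Define $r_{2^m+k} = -1 + 2^{-m} + k\,2^{-(m-1)}$ for $m \geq 0$, $0 \leq k \leq 2^m-1$, and let $(\gamma_m)_{m\geq 0}$ be a sequence of complex numbers with $\sum_{m\geq 0} 2^m |\gamma_m|^2 < \infty$ and $\sum_{m\geq 0} m\,2^m|\gamma_m|^2 = \infty$. Define $\alpha_n = \gamma_m$ for all $n \in \{2^m, \dots, 2^{m+1}-1\}$. Then $(\alpha_n)_{n\geq 1} \in \ell^2$, and for every $x \in (-1,1)$ the series $\sum_{n\geq 1} \frac{|\alpha_n|^2}{|r_n - x|}$ diverges. -/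
open Finset

private lemma harm_lb (J : ℕ) :
    Real.log ((J : ℝ) + 1) ≤ ∑ j ∈ Finset.range J, ((j : ℝ) + 1)⁻¹ := by
  have h := log_add_one_le_harmonic J
  have h2 : ((harmonic J : ℚ) : ℝ) = ∑ j ∈ Finset.range J, ((j : ℝ) + 1)⁻¹ := by
    rw [harmonic]; push_cast; rfl
  rw [h2] at h
  exact_mod_cast h

private lemma blockLB (x : ℝ) (hx1 : -1 < x) (hx2 : x < 1) :
    ∃ C : ℝ, 0 ≤ C ∧ ∃ M : ℕ, ∀ m, M ≤ m →
      ((m : ℝ) * Real.log 2 - C) * ((2:ℝ) ^ m / 2)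
        ≤ ∑ k ∈ Finset.range (2 ^ m),
            1 / |(-1 + (2:ℝ) ^ (-(m:ℤ)) + (k:ℝ) * (2:ℝ) ^ (1 - (m:ℤ))) - x| := by
  obtain ⟨a, ha⟩ : ∃ a : ℕ, ((1:ℝ)/2) ^ a < 1 + x :=
    exists_pow_lt_of_lt_one (by linarith) (by norm_num)
  obtain ⟨b, hb⟩ : ∃ b : ℕ, ((1:ℝ)/2) ^ b < (1 - x)/16 :=
    exists_pow_lt_of_lt_one (by linarith) (by norm_num)
  refine ⟨(b : ℝ) * Real.log 2, by positivity, max a (b+1), fun m hm => ?_⟩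
  have hma : a ≤ m := le_trans (le_max_left _ _) hm
  have hmb : b + 1 ≤ m := le_trans (le_max_right _ _) hm
  set e : ℝ := (2:ℝ) ^ m with he
  have he1 : (1:ℝ) ≤ e := one_le_pow₀ (by norm_num)
  have he0 : (0:ℝ) < e := by linarith
  -- basic zpow rewrites
  have hz1 : (2:ℝ) ^ (-(m:ℤ)) = e⁻¹ := by
    rw [zpow_neg, zpow_natCast]
  have hz2 : (2:ℝ) ^ (1 - (m:ℤ)) = 2 / e := by
    rw [zpow_sub₀ (by norm_num : (2:ℝ) ≠ 0), zpow_natCast, zpow_one]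
  -- condition (i): 1/e ≤ 1+x
  have hi : e⁻¹ ≤ 1 + x := by
    have : ((1:ℝ)/2) ^ m ≤ ((1:ℝ)/2) ^ a := pow_le_pow_of_le_one (by norm_num) (by norm_num) hma
    have h12 : ((1:ℝ)/2) ^ m = e⁻¹ := by rw [he, ← inv_pow]; norm_num
    linarith [h12 ▸ this]
  -- condition on b : 2^{-b} ≤ (1-x)/16
  have hib : ((2:ℝ) ^ b)⁻¹ ≤ (1 - x)/16 := by
    have : ((1:ℝ)/2) ^ b = ((2:ℝ) ^ b)⁻¹ := by rw [← inv_pow]; norm_num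
    linarith [this ▸ hb]
  -- condition (iii): 2 ≤ e * (1-x)
  have hiii : 2 ≤ e * (1 - x) := by
    have h1 : ((1:ℝ)/2) ^ (m-1) ≤ ((1:ℝ)/2) ^ b :=
      pow_le_pow_of_le_one (by norm_num) (by norm_num) (by omega)
    have h2 : e = 2 * 2 ^ (m-1) := by
      rw [he, ← pow_succ']
      congr 1
      omega
    have h3 : ((1:ℝ)/2) ^ (m-1) = ((2:ℝ) ^ (m-1))⁻¹ := by rw [← inv_pow]; norm_num
    have h4 : ((2:ℝ) ^ (m-1))⁻¹ < (1-x)/16 := by rw [← h3]; linarith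
    have h5 : (0:ℝ) < (2:ℝ) ^ (m-1) := by positivity
    have h6 : (2:ℝ)^(m-1) * ((2:ℝ)^(m-1))⁻¹ = 1 := mul_inv_cancel₀ (ne_of_gt h5)
    nlinarith [mul_lt_mul_of_pos_left h4 h5]
  set t : ℝ := ((x + 1) * e - 1) / 2 with ht
  have ht0 : 0 ≤ t := by
    have hee : e⁻¹ * e = 1 := inv_mul_cancel₀ (ne_of_gt he0)
    have h7 := mul_le_mul_of_nonneg_right hi (le_of_lt he0)
    have : 1 ≤ (x+1) * e := by nlinarith
    rw [ht]; linarith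
  set k0 : ℕ := ⌊t⌋₊ + 1 with hk0
  have hk0gt : t < (k0 : ℝ) := by
    rw [hk0]; push_cast; exact Nat.lt_floor_add_one t
  have hk0le : (k0 : ℝ) ≤ t + 1 := by
    rw [hk0]; push_cast; linarith [Nat.floor_le ht0]
  set J : ℕ := 2 ^ (m - b) with hJ
  have hJe : (J : ℝ) ≤ e * ((1-x)/16) := by
    have h1 : (J : ℝ) = e / 2 ^ b := by
      rw [hJ, he]
      push_cast
      rw [eq_div_iff (by positivity)]
      rw [← pow_add]
      congr 1
      omega
    rw [h1, div_eq_mul_inv]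
    exact mul_le_mul_of_nonneg_left hib (le_of_lt he0)
  have hk0J : k0 + J ≤ 2 ^ m := by
    have h1 : (k0 : ℝ) + J ≤ e := by
      have h2 : (k0:ℝ) + J ≤ (x+1)*e/2 + 1/2 + e * ((1-x)/16) := by
        rw [ht] at hk0le; linarith
      nlinarith
    rw [he] at h1
    exact_mod_cast h1
  set p : ℕ → ℝ := fun k => -1 + (2:ℝ) ^ (-(m:ℤ)) + (k:ℝ) * (2:ℝ) ^ (1 - (m:ℤ)) with hp
  have hpval : ∀ k : ℕ, p k - x = (2/e) * ((k:ℝ) - t) := by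
    intro k
    rw [hp]
    simp only
    rw [hz1, hz2, ht]
    field_simp
    ring
  -- main chain
  have hnn : ∀ k ∈ Finset.range (2^m), 0 ≤ 1 / |p k - x| := by
    intro k _; positivity
  have step1 : ∑ k ∈ Finset.Ico k0 (k0 + J), 1 / |p k - x|
      ≤ ∑ k ∈ Finset.range (2^m), 1 / |p k - x| := by
    apply Finset.sum_le_sum_of_subset_of_nonneg
    · intro k hk
      simp only [Finset.mem_Ico] at hk
      simp only [Finset.mem_range]
      omega
    · intro k hk _; positivity
  have step2 : ∑ k ∈ Finset.Ico k0 (k0 + J), 1 / |p k - x|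
      = ∑ j ∈ Finset.range J, 1 / |p (k0 + j) - x| := by
    rw [Finset.sum_Ico_eq_sum_range]
    simp
  have step3 : ∀ j ∈ Finset.range J, (e/2) * ((j:ℝ)+1)⁻¹ ≤ 1 / |p (k0 + j) - x| := by
    intro j hj
    have hd : p (k0 + j) - x = (2/e) * ((k0:ℝ) + j - t) := by
      rw [hpval (k0 + j)]; push_cast; ring_nf
    have hpos : 0 < p (k0 + j) - x := by
      rw [hd]
      have : (0:ℝ) < (k0:ℝ) + j - t := by
        have : (0:ℝ) ≤ (j:ℝ) := Nat.cast_nonneg j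
        linarith
      positivity
    have hub : p (k0 + j) - x ≤ (2/e) * ((j:ℝ)+1) := by
      rw [hd]
      apply mul_le_mul_of_nonneg_left _ (by positivity)
      linarith
    have hj1 : ((j:ℝ)+1) ≠ 0 := by positivity
    have hne : e ≠ 0 := ne_of_gt he0
    rw [abs_of_pos hpos, le_div_iff₀ hpos]
    calc (e/2) * ((j:ℝ)+1)⁻¹ * (p (k0+j) - x)
        ≤ (e/2) * ((j:ℝ)+1)⁻¹ * ((2/e) * ((j:ℝ)+1)) := by
          apply mul_le_mul_of_nonneg_left hub (by positivity)
      _ = 1 := by field_simp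
  have step4 : (e/2) * ∑ j ∈ Finset.range J, ((j:ℝ)+1)⁻¹
      ≤ ∑ j ∈ Finset.range J, 1 / |p (k0 + j) - x| := by
    rw [Finset.mul_sum]
    exact Finset.sum_le_sum step3
  have step5 : ((m:ℝ) - b) * Real.log 2 ≤ ∑ j ∈ Finset.range J, ((j:ℝ)+1)⁻¹ := by
    refine le_trans ?_ (harm_lb J)
    have h1 : ((m:ℝ) - b) * Real.log 2 = Real.log ((J:ℝ)) := by
      rw [hJ]
      push_cast
      rw [Real.log_pow]
      rw [Nat.cast_sub (by omega)]
    rw [h1]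
    have hJ0 : (0:ℝ) < J := by
      have h9 : 0 < J := by rw [hJ]; positivity
      exact_mod_cast h9
    apply Real.log_le_log hJ0
    linarith
  calc ((m : ℝ) * Real.log 2 - (b:ℝ) * Real.log 2) * (e / 2)
      = (e/2) * (((m:ℝ) - b) * Real.log 2) := by ring
    _ ≤ (e/2) * ∑ j ∈ Finset.range J, ((j:ℝ)+1)⁻¹ := by
        apply mul_le_mul_of_nonneg_left step5 (by positivity)
    _ ≤ ∑ j ∈ Finset.range J, 1 / |p (k0 + j) - x| := step4
    _ = ∑ k ∈ Finset.Ico k0 (k0 + J), 1 / |p k - x| := step2.symm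
    _ ≤ ∑ k ∈ Finset.range (2^m), 1 / |p k - x| := step1

private lemma key_split (F : ℕ → ℝ) (M : ℕ) :
    ∑ n ∈ Finset.range (2 ^ M - 1), F n
      = ∑ m ∈ Finset.range M, ∑ k ∈ Finset.range (2 ^ m), F (2 ^ m - 1 + k) := by
  induction M with
  | zero => simp
  | succ M ih =>
    have h1 : (1:ℕ) ≤ 2 ^ M := Nat.one_le_two_pow
    have h2 : 2 ^ M - 1 ≤ 2 ^ (M+1) - 1 := by
      have : (2:ℕ) ^ (M+1) = 2 * 2 ^ M := by ring
      omega
    rw [Finset.sum_range_succ, ← ih, Finset.range_eq_Ico,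
      ← Finset.sum_Ico_consecutive F (Nat.zero_le (2^M - 1)) h2,
      ← Finset.range_eq_Ico]
    have h3 : 2 ^ (M+1) - 1 - (2 ^ M - 1) = 2 ^ M := by
      have : (2:ℕ) ^ (M+1) = 2 * 2 ^ M := by ring
      omega
    rw [Finset.sum_Ico_eq_sum_range, h3]

/-- The divergence example: with the dyadic sequence `r` and `α n = γ m` for
`2^m ≤ n ≤ 2^{m+1}-1`, where `∑ 2^m ‖γ m‖² < ∞` and `∑ m 2^m ‖γ m‖² = ∞`,
the sequence `α` is in `ℓ²` but `∑ ‖α n‖²/|r n - x|` diverges for every `x ∈ (-1,1)`. -/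
theorem stmt5 (r : ℕ → ℝ)
    (hr : ∀ m k : ℕ, k < 2 ^ m →
      r (2 ^ m + k) = -1 + (2 : ℝ) ^ (-(m : ℤ)) + (k : ℝ) * (2 : ℝ) ^ (1 - (m : ℤ)))
    (γ : ℕ → ℂ)
    (hγ1 : Summable (fun m : ℕ => (2 : ℝ) ^ m * ‖γ m‖ ^ 2))
    (hγ2 : ¬ Summable (fun m : ℕ => (m : ℝ) * 2 ^ m * ‖γ m‖ ^ 2))
    (α : ℕ → ℂ)
    (hα : ∀ m k : ℕ, k < 2 ^ m → α (2 ^ m + k) = γ m) :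
    Summable (fun n : ℕ => ‖α (n + 1)‖ ^ 2) ∧
      ∀ x ∈ Set.Ioo (-1 : ℝ) 1,
        ¬ Summable (fun n : ℕ => ‖α (n + 1)‖ ^ 2 / |r (n + 1) - x|) := by
  have hidx : ∀ m k : ℕ, k < 2 ^ m → 2 ^ m - 1 + k + 1 = 2 ^ m + k := by
    intro m k _
    have : (1:ℕ) ≤ 2 ^ m := Nat.one_le_two_pow
    omega
  constructor
  · -- Part 1 : summability
    apply summable_of_sum_range_le (c := ∑' m, (2 : ℝ) ^ m * ‖γ m‖ ^ 2)
      (fun n => sq_nonneg _)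
    intro N
    calc ∑ n ∈ Finset.range N, ‖α (n+1)‖ ^ 2
        ≤ ∑ n ∈ Finset.range (2 ^ N - 1), ‖α (n+1)‖ ^ 2 := by
          apply Finset.sum_le_sum_of_subset_of_nonneg
          · apply Finset.range_subset_range.mpr
            have := Nat.lt_two_pow_self (n := N)
            omega
          · intro i _ _; exact sq_nonneg _
      _ = ∑ m ∈ Finset.range N, ∑ k ∈ Finset.range (2^m), ‖α (2^m - 1 + k + 1)‖ ^ 2 :=
          key_split (fun n => ‖α (n+1)‖ ^ 2) N
      _ = ∑ m ∈ Finset.range N, (2 : ℝ) ^ m * ‖γ m‖ ^ 2 := by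
          apply Finset.sum_congr rfl
          intro m _
          have hconst : ∀ k ∈ Finset.range (2^m), ‖α (2^m - 1 + k + 1)‖ ^ 2 = ‖γ m‖ ^ 2 := by
            intro k hk
            rw [hidx m k (Finset.mem_range.mp hk), hα m k (Finset.mem_range.mp hk)]
          rw [Finset.sum_congr rfl hconst, Finset.sum_const, Finset.card_range, nsmul_eq_mul]
          push_cast
          ring
      _ ≤ ∑' m, (2 : ℝ) ^ m * ‖γ m‖ ^ 2 :=
          hγ1.sum_le_tsum _ (fun m _ => by positivity)
  · -- Part 2 : divergence
    rintro x ⟨hx1, hx2⟩ hsum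
    set F : ℕ → ℝ := fun n => ‖α (n + 1)‖ ^ 2 / |r (n + 1) - x| with hF
    have hFnn : ∀ n, 0 ≤ F n := fun n => by positivity
    set g : ℕ → ℝ := fun m => ∑ k ∈ Finset.range (2 ^ m), F (2 ^ m - 1 + k) with hg
    have hgnn : ∀ m, 0 ≤ g m := fun m => Finset.sum_nonneg fun k _ => hFnn _
    have hgsum : Summable g := by
      apply summable_of_sum_range_le (c := ∑' n, F n) hgnn
      intro M
      rw [show ∑ m ∈ Finset.range M, g m
          = ∑ n ∈ Finset.range (2 ^ M - 1), F n from (key_split F M).symm]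
      exact hsum.sum_le_tsum _ (fun n _ => hFnn n)
    obtain ⟨C, hC0, M, hM⟩ := blockLB x hx1 hx2
    -- block lower bound for g
    have hgb : ∀ m, M ≤ m →
        ((m : ℝ) * Real.log 2 - C) * ((2:ℝ) ^ m / 2) * ‖γ m‖ ^ 2 ≤ g m := by
      intro m hm
      have hblock : g m = ‖γ m‖ ^ 2 *
          ∑ k ∈ Finset.range (2 ^ m),
            1 / |(-1 + (2:ℝ) ^ (-(m:ℤ)) + (k:ℝ) * (2:ℝ) ^ (1 - (m:ℤ))) - x| := by
        rw [hg, Finset.mul_sum]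
        apply Finset.sum_congr rfl
        intro k hk
        have hklt := Finset.mem_range.mp hk
        rw [hF]
        simp only
        rw [hidx m k hklt, hα m k hklt, hr m k hklt]
        ring
      rw [hblock]
      calc ((m : ℝ) * Real.log 2 - C) * ((2:ℝ) ^ m / 2) * ‖γ m‖ ^ 2
          = ‖γ m‖ ^ 2 * (((m : ℝ) * Real.log 2 - C) * ((2:ℝ) ^ m / 2)) := by ring
        _ ≤ _ := mul_le_mul_of_nonneg_left (hM m hm) (sq_nonneg _)
    -- derive summability of m * 2^m * ‖γ m‖^2, contradiction
    have hlog2 : (0:ℝ) < Real.log 2 := Real.log_pos (by norm_num)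
    set h : ℕ → ℝ := fun m =>
      (2 / Real.log 2) * g m + (C / Real.log 2) * ((2:ℝ) ^ m * ‖γ m‖ ^ 2) with hh
    have hhsum : Summable h :=
      (hgsum.mul_left _).add (hγ1.mul_left _)
    have hcmp : ∀ m, M ≤ m → (m : ℝ) * 2 ^ m * ‖γ m‖ ^ 2 ≤ h m := by
      intro m hm
      have h1 := hgb m hm
      have h2 := mul_le_mul_of_nonneg_left h1 (le_of_lt (by positivity :
        (0:ℝ) < 2 / Real.log 2))
      rw [hh]
      simp only
      have h3 : (2 / Real.log 2) * (((m : ℝ) * Real.log 2 - C) * ((2:ℝ) ^ m / 2) * ‖γ m‖ ^ 2)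
          = (m : ℝ) * 2 ^ m * ‖γ m‖ ^ 2 - (C / Real.log 2) * ((2:ℝ) ^ m * ‖γ m‖ ^ 2) := by
        field_simp
      linarith [h3 ▸ h2]
    apply hγ2
    rw [← summable_nat_add_iff M]
    apply Summable.of_nonneg_of_le (fun n => by positivity)
      (fun n => hcmp (n + M) (Nat.le_add_left M n))
    exact (summable_nat_add_iff M).mpr hhsum
end

section
/- Let $T, \tilde{T}$ be bounded operators on a Hilbert space that are quasisimilar. If $\tilde{T}$ has a nontrivial closed hyperinvariant subspace, then so does $T$. Moreover, $\sigma_p(T) = \sigma_p(\tilde{T})$ is false in general, but if $\lambda$ is an eigenvalue of $\tilde{T}$ then $\lambda$ is an eigenvalue of $T$. -/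
open ContinuousLinearMap

/-- If `T` and `T̃` are quasisimilar bounded operators, a nontrivial closed hyperinvariant
subspace for `T̃` yields one for `T`, and every eigenvalue of `T̃` is an eigenvalue of `T`. -/
theorem stmt9 {H : Type*} [NormedAddCommGroup H] [InnerProductSpace ℂ H] [CompleteSpace H]
    (T T' X Y : H →L[ℂ] H)
    (hX1 : LinearMap.ker (X : H →ₗ[ℂ] H) = ⊥) (hX2 : LinearMap.ker (adjoint X : H →ₗ[ℂ] H) = ⊥)
    (hY1 : LinearMap.ker (Y : H →ₗ[ℂ] H) = ⊥) (hY2 : LinearMap.ker (adjoint Y : H →ₗ[ℂ] H) = ⊥)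
    (hTX : T * X = X * T') (hYT : Y * T = T' * Y) :
    ((∃ M : Submodule ℂ H, IsClosed (M : Set H) ∧ M ≠ ⊥ ∧ M ≠ ⊤ ∧
        ∀ S : H →L[ℂ] H, S * T' = T' * S → ∀ x ∈ M, S x ∈ M) →
      ∃ M : Submodule ℂ H, IsClosed (M : Set H) ∧ M ≠ ⊥ ∧ M ≠ ⊤ ∧
        ∀ S : H →L[ℂ] H, S * T = T * S → ∀ x ∈ M, S x ∈ M) ∧
    ∀ (μ : ℂ) (x : H), x ≠ 0 → T' x = μ • x → ∃ y : H, y ≠ 0 ∧ T y = μ • y := by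
  have hXinj : ∀ x : H, X x = 0 → x = 0 := by
    intro x hx
    have h : x ∈ LinearMap.ker (X : H →ₗ[ℂ] H) := LinearMap.mem_ker.mpr hx
    rwa [hX1, Submodule.mem_bot] at h
  constructor
  · rintro ⟨M, hMc, hMbot, hMtop, hMhyp⟩
    -- the candidate subspace for T
    set s : Set H := {y | ∃ A : H →L[ℂ] H, A * T = T * A ∧ ∃ m ∈ M, y = A (X m)} with hs
    set p : Submodule ℂ H := Submodule.span ℂ s with hp
    refine ⟨p.topologicalClosure, Submodule.isClosed_topologicalClosure p, ?_, ?_, ?_⟩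
    · -- nontrivial below: contains X m for some m ≠ 0
      obtain ⟨m, hmM, hm0⟩ := Submodule.exists_mem_ne_zero_of_ne_bot hMbot
      intro hbot
      have hmem : X m ∈ p.topologicalClosure := by
        apply Submodule.le_topologicalClosure
        apply Submodule.subset_span
        exact ⟨1, by rw [one_mul, mul_one], m, hmM, by simp⟩
      rw [hbot, Submodule.mem_bot] at hmem
      exact hm0 (hXinj m hmem)
    · -- not top: Y maps it into M
      have hYp : p.topologicalClosure ≤ Submodule.comap (Y : H →ₗ[ℂ] H) M := by
        apply Submodule.topologicalClosure_minimal
        · rw [Submodule.span_le]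
          rintro y ⟨A, hA, m, hmM, rfl⟩
          have hcomm : (Y * A * X) * T' = T' * (Y * A * X) := by
            have h1 : X * T' = T * X := hTX.symm
            calc (Y * A * X) * T' = Y * A * (X * T') := by noncomm_ring
              _ = Y * A * (T * X) := by rw [h1]
              _ = Y * (A * T) * X := by noncomm_ring
              _ = Y * (T * A) * X := by rw [hA]
              _ = (Y * T) * (A * X) := by noncomm_ring
              _ = (T' * Y) * (A * X) := by rw [hYT]
              _ = T' * (Y * A * X) := by noncomm_ring
          have := hMhyp (Y * A * X) hcomm m hmM
          simpa using this
        · exact hMc.preimage Y.continuous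
      intro htop
      have hrange : LinearMap.range (Y : H →ₗ[ℂ] H) ≤ M := by
        rintro _ ⟨x, rfl⟩
        have : x ∈ p.topologicalClosure := htop ▸ Submodule.mem_top
        exact hYp this
      -- dense range of Y : (range Y)ᗮ = ⊥
      have horth : (LinearMap.range (Y : H →ₗ[ℂ] H))ᗮ = ⊥ := by
        rw [Submodule.eq_bot_iff]
        intro z hz
        have hz0 : adjoint Y z = 0 := by
          apply ext_inner_right ℂ
          intro x
          rw [adjoint_inner_left, inner_zero_left]
          have h := (Submodule.mem_orthogonal _ z).mp hz (Y x) ⟨x, rfl⟩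
          rw [← inner_conj_symm, h, map_zero]
        have := LinearMap.mem_ker.mpr hz0
        rwa [hY2, Submodule.mem_bot] at this
      have hdense : (LinearMap.range (Y : H →ₗ[ℂ] H)).topologicalClosure = ⊤ := by
        rw [← Submodule.orthogonal_orthogonal_eq_closure, horth,
          Submodule.bot_orthogonal_eq_top]
      have : (⊤ : Submodule ℂ H) ≤ M := by
        rw [← hdense]
        exact Submodule.topologicalClosure_minimal _ hrange hMc
      exact hMtop (top_le_iff.mp this)
    · -- hyperinvariance
      intro S hS x hx
      have hle : p.topologicalClosure ≤
          Submodule.comap (S : H →ₗ[ℂ] H) p.topologicalClosure := by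
        apply Submodule.topologicalClosure_minimal
        · rw [Submodule.span_le]
          rintro y ⟨A, hA, m, hmM, rfl⟩
          have : S (A (X m)) ∈ s := by
            refine ⟨S * A, ?_, m, hmM, by simp⟩
            calc (S * A) * T = S * (A * T) := by noncomm_ring
              _ = S * (T * A) := by rw [hA]
              _ = (S * T) * A := by noncomm_ring
              _ = (T * S) * A := by rw [hS]
              _ = T * (S * A) := by noncomm_ring
          exact p.le_topologicalClosure (Submodule.subset_span this)
        · exact (Submodule.isClosed_topologicalClosure p).preimage S.continuous
      exact hle hx
  · intro μ x hx hTx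
    refine ⟨X x, fun h => hx (hXinj x h), ?_⟩
    have h := congrArg (fun f => f x) hTX
    simp only [ContinuousLinearMap.mul_apply] at h
    rw [h, hTx, map_smul]
end
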